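/- Let S be an n×n matrix over a field K₀ with S_{ij} = 0 for i+j ≤ n and all anti-diagonal entries nonzero, and let Y = (y_{jk}) be a matrix of indeterminates. Then for each fixed k, the polynomial P_{ik}(S,Y) = Σ_{i'≤j≤k} M_{ij}(S)·N_{jk}(Y) equals D_i(S)·N_{i',k}(Y) plus a K₀-linear combination of the minors N_{jk}(Y) with i' < j ≤ k, and D_i(S) ≠ 0. -/

import Mathlib

open Matrix BigOperators

/-- Clamp a natural number into `Fin n` (identity on values `< n`). -/
def fidx (n : ℕ) (hn : 0 < n) (x : ℕ) : Fin n := ⟨x % n, Nat.mod_lt _ hn⟩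

/-- `Dmin n hn k X` is the corner minor `D_k(X)`: determinant of the submatrix of `X`
with rows `k, …, n` and columns `1, …, n-k+1` (1-based indexing). -/
def Dmin {R : Type*} [CommRing R] (n : ℕ) (hn : 0 < n) (k : ℕ)
    (X : Matrix (Fin n) (Fin n) R) : R :=
  (Matrix.of fun a b : Fin (n - k + 1) =>
    X (fidx n hn (k - 1 + a.val)) (fidx n hn b.val)).det

/-- `Mmin n hn i j X` is the minor `M_{ij}(X)` of order `i' = n-i+1`: rows `i, …, n`
and columns `1, …, i'-1` together with column `j` (1-based indexing). -/
def Mmin {R : Type*} [CommRing R] (n : ℕ) (hn : 0 < n) (i j : ℕ)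
    (X : Matrix (Fin n) (Fin n) R) : R :=
  (Matrix.of fun a b : Fin (n - i + 1) =>
    X (fidx n hn (i - 1 + a.val)) (fidx n hn (if b.val < n - i then b.val else j - 1))).det

/-- `Nmin n hn j k Y` is the minor `N_{jk}(Y)` of order `k' = n-k+1`: rows `j, k+1, …, n`
and columns `1, …, k'` (1-based indexing). -/
def Nmin {R : Type*} [CommRing R] (n : ℕ) (hn : 0 < n) (j k : ℕ)
    (Y : Matrix (Fin n) (Fin n) R) : R :=
  (Matrix.of fun a b : Fin (n - k + 1) =>
    Y (fidx n hn (if a.val = 0 then j - 1 else k + a.val - 1)) (fidx n hn b.val)).det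

/-- `Pmin n hn i k X Y = P_{ik}(X,Y) = Σ_{i' ≤ j ≤ k} M_{ij}(X) N_{jk}(Y)`. -/
def Pmin {R : Type*} [CommRing R] (n : ℕ) (hn : 0 < n) (i k : ℕ)
    (X Y : Matrix (Fin n) (Fin n) R) : R :=
  ∑ j ∈ Finset.Icc (n - i + 1) k, Mmin n hn i j X * Nmin n hn j k Y

/-- Upper unitriangular matrices: ones on the diagonal, zeros below it. -/
def IsUnitriangular {R : Type*} [CommRing R] {n : ℕ}
    (u : Matrix (Fin n) (Fin n) R) : Prop :=
  (∀ i, u i i = 1) ∧ ∀ i j : Fin n, j < i → u i j = 0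

/-- The generic `n × n` matrix, whose entries are independent indeterminates. -/
noncomputable def Xgen (K : Type*) [CommRing K] (n : ℕ) :
    Matrix (Fin n) (Fin n) (MvPolynomial (Fin n × Fin n) K) :=
  Matrix.of fun a b => MvPolynomial.X (a, b)

lemma antidiag_det_ne_zero {K : Type*} [Field K] {m : ℕ} (M : Matrix (Fin m) (Fin m) K)
    (h0 : ∀ a b : Fin m, a.val + b.val + 1 < m → M a b = 0)
    (hd : ∀ a : Fin m, M a a.rev ≠ 0) : M.det ≠ 0 := by
  have key : (M.submatrix id Fin.revPerm).det = Equiv.Perm.sign (Fin.revPerm (n := m)) * M.det :=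
    Matrix.det_permute' _ _
  have hlt : (M.submatrix id (Fin.revPerm (n := m))).BlockTriangular OrderDual.toDual := by
    intro a b hab
    apply h0
    have : a.val < b.val := hab
    have hb := b.isLt
    simp [Fin.rev]
    omega
  have hdet : (M.submatrix id Fin.revPerm).det = ∏ a, M a a.rev :=
    Matrix.det_of_lowerTriangular _ hlt
  intro h
  rw [h, mul_zero] at key
  rw [key] at hdet
  exact (Finset.prod_ne_zero_iff.2 fun a _ => hd a) hdet.symm

/-- let `S` be an anti-triangular matrix over `K₀` with nonzero
anti-diagonal entries and `Y` a matrix of indeterminates. Then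
`P_{ik}(S,Y) = D_i(S)·N_{i',k}(Y) + (a K₀-linear combination of the N_{jk}(Y), i' < j ≤ k)`,
and `D_i(S) ≠ 0`. -/
theorem Pmin_section_triangular {K₀ : Type*} [Field K₀] (n : ℕ) (hn : 0 < n)
    (S : Matrix (Fin n) (Fin n) K₀)
    (hS : ∀ a b : Fin n, a.val + b.val + 2 ≤ n → S a b = 0)
    (hS' : ∀ r ∈ Finset.Icc 1 n, S (fidx n hn (r - 1)) (fidx n hn (n - r)) ≠ 0)
    (i k : ℕ) (hi : 1 ≤ i) (hin : i ≤ n) (hik : n - i + 1 < k) (hkn : k ≤ n) :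
    Dmin n hn i S ≠ 0 ∧
    ∃ c : ℕ → K₀,
      Pmin n hn i k (S.map MvPolynomial.C) (Xgen K₀ n) =
        MvPolynomial.C (Dmin n hn i S) * Nmin n hn (n - i + 1) k (Xgen K₀ n) +
          ∑ j ∈ Finset.Ioc (n - i + 1) k,
            MvPolynomial.C (c j) * Nmin n hn j k (Xgen K₀ n) := by
  constructor
  · -- D_i(S) ≠ 0
    apply antidiag_det_ne_zero
    · intro a b hab
      have ha := a.isLt
      have hb := b.isLt
      simp only [Matrix.of_apply]
      apply hS
      simp only [fidx]
      have h1 : (i - 1 + a.val) % n = i - 1 + a.val := Nat.mod_eq_of_lt (by omega)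
      have h2 : b.val % n = b.val := Nat.mod_eq_of_lt (by omega)
      simp only [h1, h2]
      omega
    · intro a
      have ha := a.isLt
      have := hS' (i + a.val) (Finset.mem_Icc.2 ⟨by omega, by omega⟩)
      simp only [Matrix.of_apply]
      have h1 : i + a.val - 1 = i - 1 + a.val := by omega
      have h2 : (a.rev : ℕ) = n - (i + a.val) := by
        simp [Fin.rev]; omega
      rw [h1] at this
      rw [h2]
      exact this
  · refine ⟨fun j => Mmin n hn i j S, ?_⟩
    have hmap : ∀ j, Mmin n hn i j (S.map MvPolynomial.C) =
        (MvPolynomial.C (Mmin n hn i j S) : MvPolynomial (Fin n × Fin n) K₀) := fun j =>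
      (RingHom.map_det (MvPolynomial.C (σ := Fin n × Fin n)) _).symm
    have hMD : Mmin n hn i (n - i + 1) S = Dmin n hn i S := by
      unfold Mmin Dmin
      congr 1
      ext a b
      have hb := b.isLt
      have : (if b.val < n - i then b.val else n - i + 1 - 1) = b.val := by split <;> omega
      simp only [Matrix.of_apply, this]
    unfold Pmin
    rw [Finset.Icc_eq_cons_Ioc (le_of_lt hik), Finset.sum_cons, hmap, hMD]
    rw [add_right_inj]
    exact Finset.sum_congr rfl fun j _ => by rw [hmap]
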